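/- For every 0 < q < 1, the sum Σ_π q^{|π|} over all plane partitions π converges and equals MacMahon's product: Σ_π q^{|π|} = ∏_{n=1}^{∞} (1 − q^n)^{−n}. -/

import Mathlib

/-- A plane partition: a function `ℕ → ℕ → ℕ` (0-indexed), weakly decreasing in each
argument, with finite support (equivalently, finite total sum). -/
structure PlanePartition where
  toFun : ℕ → ℕ → ℕ
  anti_left : ∀ i j, toFun (i + 1) j ≤ toFun i j
  anti_right : ∀ i j, toFun i (j + 1) ≤ toFun i j
  finite_support : {p : ℕ × ℕ | toFun p.1 p.2 ≠ 0}.Finite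

/-- The volume `|π| = Σ_{i,j} π(i,j)` of a plane partition. -/
noncomputable def PlanePartition.vol (π : PlanePartition) : ℕ :=
  π.finite_support.toFinset.sum fun p => π.toFun p.1 p.2

namespace Mac

open Finset

lemma PP.ext {π₁ π₂ : PlanePartition} (h : π₁.toFun = π₂.toFun) : π₁ = π₂ := by
  cases π₁; cases π₂; cases h; rfl

lemma anti_left' (π : PlanePartition) {i i' : ℕ} (h : i ≤ i') (j : ℕ) :
    π.toFun i' j ≤ π.toFun i j := by
  induction i' with
  | zero => simp_all
  | succ n ih =>
    rcases Nat.lt_or_ge i (n+1) with hl | hl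
    · exact le_trans (π.anti_left n j) (ih (by omega))
    · have : i = n + 1 := by omega
      simp [this]

lemma anti_right' (π : PlanePartition) (i : ℕ) {j j' : ℕ} (h : j ≤ j') :
    π.toFun i j' ≤ π.toFun i j := by
  induction j' with
  | zero => simp_all
  | succ n ih =>
    rcases Nat.lt_or_ge j (n+1) with hl | hl
    · exact le_trans (π.anti_right i n) (ih (by omega))
    · have : j = n + 1 := by omega
      simp [this]

lemma le00 (π : PlanePartition) (i j : ℕ) : π.toFun i j ≤ π.toFun 0 0 :=
  le_trans (anti_left' π (Nat.zero_le i) j) (anti_right' π 0 (Nat.zero_le j))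

lemma row_exists_zero (π : PlanePartition) (i : ℕ) : ∃ J, π.toFun i J = 0 := by
  by_contra h
  push_neg at h
  have : Set.Infinite {p : ℕ × ℕ | π.toFun p.1 p.2 ≠ 0} := by
    apply Set.infinite_of_injective_forall_mem (f := fun J : ℕ => ((i, J) : ℕ × ℕ))
      (fun x y hxy => by simpa using hxy) (fun J => h J)
  exact this π.finite_support

lemma col_exists_zero (π : PlanePartition) : ∃ I, π.toFun I 0 = 0 := by
  by_contra h
  push_neg at h
  have : Set.Infinite {p : ℕ × ℕ | π.toFun p.1 p.2 ≠ 0} := by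
    apply Set.infinite_of_injective_forall_mem (f := fun I : ℕ => ((I, 0) : ℕ × ℕ))
      (fun x y hxy => by simpa using hxy) (fun I => h I)
  exact this π.finite_support

/-! ### runs -/

noncomputable def eEnd (T : ℕ → ℕ → ℕ) (i s : ℕ) : ℕ := sInf {j | T i (j+1) < T i s}

noncomputable def wStart (T : ℕ → ℕ → ℕ) (i t : ℕ) : ℕ := sInf {j | T i j = T i t}

variable {π : PlanePartition}

lemma eEnd_nonempty (i s : ℕ) (h : π.toFun i s ≠ 0) :
    {j | π.toFun i (j+1) < π.toFun i s}.Nonempty := by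
  obtain ⟨J, hJ⟩ := row_exists_zero π i
  have hJ0 : J ≠ 0 := by
    intro h0
    have := anti_right' π i (Nat.zero_le s)
    rw [h0] at hJ
    omega
  refine ⟨J - 1, ?_⟩
  have : J - 1 + 1 = J := by omega
  simp only [Set.mem_setOf_eq, this, hJ]
  omega

lemma eEnd_lt (i s : ℕ) (h : π.toFun i s ≠ 0) :
    π.toFun i (eEnd π.toFun i s + 1) < π.toFun i s :=
  Nat.sInf_mem (eEnd_nonempty i s h)

lemma le_eEnd (i s : ℕ) (h : π.toFun i s ≠ 0) : s ≤ eEnd π.toFun i s := by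
  by_contra hc
  push_neg at hc
  have h1 := eEnd_lt i s h
  have h2 : π.toFun i s ≤ π.toFun i (eEnd π.toFun i s + 1) := anti_right' π i (by omega)
  omega

lemma eEnd_const (i s : ℕ) (h : π.toFun i s ≠ 0) {j : ℕ} (h1 : s ≤ j)
    (h2 : j ≤ eEnd π.toFun i s) : π.toFun i j = π.toFun i s := by
  rcases Nat.eq_or_lt_of_le h1 with he | hlt
  · rw [← he]
  refine le_antisymm (anti_right' π i h1) ?_
  by_contra hc
  push_neg at hc
  have hmem : j - 1 ∈ {j | π.toFun i (j+1) < π.toFun i s} := by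
    have : j - 1 + 1 = j := by omega
    simp only [Set.mem_setOf_eq, this]
    exact hc
  have := Nat.sInf_le hmem
  unfold eEnd at h2
  omega

lemma le_eEnd_of_const (i s : ℕ) (h : π.toFun i s ≠ 0) {m : ℕ}
    (hm : π.toFun i m = π.toFun i s) : m ≤ eEnd π.toFun i s := by
  refine le_csInf (eEnd_nonempty i s h) ?_
  intro b hb
  simp only [Set.mem_setOf_eq] at hb
  by_contra hc
  push_neg at hc
  have : π.toFun i m ≤ π.toFun i (b + 1) := anti_right' π i (by omega)
  omega

lemma wStart_le (i t : ℕ) : wStart π.toFun i t ≤ t := Nat.sInf_le rfl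

lemma wStart_eq (i t : ℕ) : π.toFun i (wStart π.toFun i t) = π.toFun i t :=
  Nat.sInf_mem (s := {j | π.toFun i j = π.toFun i t}) ⟨t, rfl⟩

lemma wStart_const (i t : ℕ) {j : ℕ} (h1 : wStart π.toFun i t ≤ j) (h2 : j ≤ t) :
    π.toFun i j = π.toFun i t := by
  refine le_antisymm ?_ ?_
  · rw [← wStart_eq (π := π) i t]; exact anti_right' π i h1
  · exact anti_right' π i h2

lemma wStart_le_of (i t : ℕ) {m : ℕ} (hm : π.toFun i m = π.toFun i t) :
    wStart π.toFun i t ≤ m := Nat.sInf_le hm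

lemma wStart_strict (i t : ℕ) (h : 0 < wStart π.toFun i t) :
    π.toFun i t < π.toFun i (wStart π.toFun i t - 1) := by
  have hne : π.toFun i (wStart π.toFun i t - 1) ≠ π.toFun i t := by
    have := Nat.notMem_of_lt_sInf (s := {j | π.toFun i j = π.toFun i t})
      (m := wStart π.toFun i t - 1) (by unfold wStart at h ⊢; omega)
    simpa using this
  have hle : π.toFun i t ≤ π.toFun i (wStart π.toFun i t - 1) := by
    rw [← wStart_eq (π := π) i t]
    exact anti_right' π i (Nat.sub_le _ _)
  omega

end Mac

namespace Mac

variable {π : PlanePartition}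

/-! ### extraction -/

noncomputable def exA (π : PlanePartition) : ℕ := sInf {i | π.toFun i 0 = 0} - 1

noncomputable def exCol (π : PlanePartition) : ℕ → ℕ
  | 0 => 0
  | k+1 => eEnd π.toFun (exA π - k) (exCol π k)

noncomputable def exB (π : PlanePartition) : ℕ := exCol π (exA π + 1)

/-- entry column of the extraction path in row `i` -/
noncomputable def exS (π : PlanePartition) (i : ℕ) : ℕ := exCol π (exA π - i)
/-- exit column of the extraction path in row `i` -/
noncomputable def exE (π : PlanePartition) (i : ℕ) : ℕ := exCol π (exA π - i + 1)

def exMem (π : PlanePartition) (i j : ℕ) : Prop :=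
  i ≤ exA π ∧ exS π i ≤ j ∧ j ≤ exE π i

noncomputable instance (π : PlanePartition) (i j : ℕ) : Decidable (exMem π i j) := by
  unfold exMem; infer_instance

noncomputable def exFun (π : PlanePartition) : ℕ → ℕ → ℕ :=
  fun i j => π.toFun i j - if exMem π i j then 1 else 0

lemma exA_succ (h0 : π.toFun 0 0 ≠ 0) : π.toFun (exA π + 1) 0 = 0 := by
  have hne : {i | π.toFun i 0 = 0}.Nonempty := col_exists_zero π
  have hmem := Nat.sInf_mem hne
  have hpos : sInf {i | π.toFun i 0 = 0} ≠ 0 := by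
    intro hz
    rw [hz] at hmem
    exact h0 hmem
  have : exA π + 1 = sInf {i | π.toFun i 0 = 0} := by unfold exA; omega
  rw [this]
  exact hmem

lemma exA_pos (h0 : π.toFun 0 0 ≠ 0) : π.toFun (exA π) 0 ≠ 0 := by
  have hne : {i | π.toFun i 0 = 0}.Nonempty := col_exists_zero π
  have hmem := Nat.sInf_mem hne
  have hpos : sInf {i | π.toFun i 0 = 0} ≠ 0 := by
    intro hz; rw [hz] at hmem; exact h0 hmem
  have := Nat.notMem_of_lt_sInf (s := {i | π.toFun i 0 = 0}) (m := exA π)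
    (by unfold exA; omega)
  simpa using this

lemma exA_zero_row (h0 : π.toFun 0 0 ≠ 0) {i : ℕ} (hi : exA π < i) (j : ℕ) :
    π.toFun i j = 0 := by
  have h1 : π.toFun i j ≤ π.toFun (exA π + 1) 0 :=
    le_trans (anti_right' π i (Nat.zero_le j)) (anti_left' π (by omega) 0)
  rw [exA_succ h0] at h1
  omega

lemma exPos (h0 : π.toFun 0 0 ≠ 0) :
    ∀ k, k ≤ exA π → π.toFun (exA π - k) (exCol π k) ≠ 0 := by
  intro k
  induction k with
  | zero => intro _; simpa [exCol] using exA_pos h0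
  | succ n ih =>
    intro hk
    have hn : n ≤ exA π := by omega
    have hprev := ih hn
    have h1 : π.toFun (exA π - n) (exCol π (n+1)) = π.toFun (exA π - n) (exCol π n) := by
      show π.toFun (exA π - n) (eEnd π.toFun (exA π - n) (exCol π n)) = _
      exact eEnd_const _ _ hprev (le_eEnd _ _ hprev) le_rfl
    have h2 : π.toFun (exA π - (n+1)) (exCol π (n+1)) ≥ π.toFun (exA π - n) (exCol π (n+1)) := by
      apply anti_left' π (by omega)
    omega

lemma exCol_mono (h0 : π.toFun 0 0 ≠ 0) {k : ℕ} (hk : k ≤ exA π) :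
    exCol π k ≤ exCol π (k+1) :=
  le_eEnd _ _ (exPos h0 k hk)

lemma exCol_le_exB (h0 : π.toFun 0 0 ≠ 0) : ∀ k, k ≤ exA π + 1 → exCol π k ≤ exB π := by
  intro k hk
  induction' hh : (exA π + 1 - k) with n ih generalizing k
  · have : k = exA π + 1 := by omega
    rw [this]; rfl
  · have h1 : exCol π k ≤ exCol π (k+1) := exCol_mono h0 (by omega)
    have h2 : exCol π (k+1) ≤ exB π := ih (k+1) (by omega) (by omega)
    omega

lemma exE_eq {i : ℕ} (hi : i ≤ exA π) : exE π i = eEnd π.toFun i (exS π i) := by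
  have h2 : exA π - (exA π - i) = i := by omega
  unfold exE exS
  rw [show exA π - i + 1 = (exA π - i) + 1 from rfl]
  rw [show exCol π ((exA π - i) + 1)
      = eEnd π.toFun (exA π - (exA π - i)) (exCol π (exA π - i)) from rfl, h2]

lemma exS_pos (h0 : π.toFun 0 0 ≠ 0) {i : ℕ} (hi : i ≤ exA π) :
    π.toFun i (exS π i) ≠ 0 := by
  have := exPos h0 (exA π - i) (by omega)
  have h2 : exA π - (exA π - i) = i := by omega
  rw [h2] at this
  exact this

lemma exS_le_exE (h0 : π.toFun 0 0 ≠ 0) {i : ℕ} (hi : i ≤ exA π) : exS π i ≤ exE π i := by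
  rw [exE_eq hi]; exact le_eEnd _ _ (exS_pos h0 hi)

/-- K1 : the path is constant along each row segment -/
lemma exRun_const (h0 : π.toFun 0 0 ≠ 0) {i j : ℕ} (hi : i ≤ exA π)
    (h1 : exS π i ≤ j) (h2 : j ≤ exE π i) : π.toFun i j = π.toFun i (exS π i) := by
  rw [exE_eq hi] at h2
  exact eEnd_const _ _ (exS_pos h0 hi) h1 h2

/-- K2 : strict drop just after the end of each row segment -/
lemma exRun_drop (h0 : π.toFun 0 0 ≠ 0) {i : ℕ} (hi : i ≤ exA π) :
    π.toFun i (exE π i + 1) < π.toFun i (exS π i) := by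
  rw [exE_eq hi]
  exact eEnd_lt _ _ (exS_pos h0 hi)

/-- K3 : the entry column of a row is the exit column of the row below -/
lemma exS_eq_exE_succ {i : ℕ} (hi : i < exA π) : exS π i = exE π (i+1) := by
  unfold exS exE
  have : exA π - i = exA π - (i+1) + 1 := by omega
  rw [this]

lemma exS_bottom : exS π (exA π) = 0 := by
  unfold exS
  rw [Nat.sub_self]
  rfl

lemma exMem_pos (h0 : π.toFun 0 0 ≠ 0) {i j : ℕ} (hm : exMem π i j) :
    π.toFun i j ≠ 0 := by
  obtain ⟨hi, h1, h2⟩ := hm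
  rw [exRun_const h0 hi h1 h2]
  exact exS_pos h0 hi

lemma exFun_le (i j : ℕ) : exFun π i j ≤ π.toFun i j := by
  unfold exFun; omega

lemma exFun_right (h0 : π.toFun 0 0 ≠ 0) (i j : ℕ) :
    exFun π i (j+1) ≤ exFun π i j := by
  unfold exFun
  have hanti := π.anti_right i j
  by_cases m1 : exMem π i j
  · by_cases m2 : exMem π i (j+1)
    · rw [if_pos m1, if_pos m2]; omega
    · rw [if_pos m1, if_neg m2]
      obtain ⟨hi, h1, h2⟩ := m1
      have hj : j = exE π i := by
        by_contra hc
        exact m2 ⟨hi, by omega, by omega⟩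
      have hd := exRun_drop h0 hi
      have hc := exRun_const h0 hi h1 h2
      rw [hj] at hc ⊢
      omega
  · by_cases m2 : exMem π i (j+1)
    · rw [if_neg m1, if_pos m2]; omega
    · rw [if_neg m1, if_neg m2]; omega

lemma exFun_left (h0 : π.toFun 0 0 ≠ 0) (i j : ℕ) :
    exFun π (i+1) j ≤ exFun π i j := by
  unfold exFun
  have hanti := π.anti_left i j
  by_cases m1 : exMem π (i+1) j
  · by_cases m2 : exMem π i j
    · rw [if_pos m1, if_pos m2]; omega
    · rw [if_pos m1, if_neg m2]; omega
  · by_cases m2 : exMem π i j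
    · rw [if_neg m1, if_pos m2]
      obtain ⟨hi, h1, h2⟩ := m2
      rcases Nat.eq_or_lt_of_le hi with he | hlt
      · -- i = exA π: row below is zero
        have hz : π.toFun (i+1) j = 0 := exA_zero_row h0 (by omega) j
        have hp : π.toFun i j ≠ 0 := exMem_pos h0 ⟨hi, h1, h2⟩
        omega
      · -- i < exA π
        have hi1 : i + 1 ≤ exA π := hlt
        have hK3 : exS π i = exE π (i+1) := exS_eq_exE_succ hlt
        have hge : j > exE π (i+1) := by
          by_contra hc
          push_neg at hc
          refine m1 ⟨hi1, ?_, hc⟩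
          have := exS_le_exE h0 hi1
          omega
        have c1 : π.toFun (i+1) j ≤ π.toFun (i+1) (exE π (i+1) + 1) :=
          anti_right' π (i+1) (by omega)
        have c2 : π.toFun (i+1) (exE π (i+1) + 1) < π.toFun (i+1) (exS π (i+1)) :=
          exRun_drop h0 hi1
        have c3 : π.toFun (i+1) (exE π (i+1)) = π.toFun (i+1) (exS π (i+1)) :=
          exRun_const h0 hi1 (exS_le_exE h0 hi1) le_rfl
        have c4 : π.toFun (i+1) (exS π i) ≤ π.toFun i (exS π i) := π.anti_left i _
        have c5 : π.toFun i j = π.toFun i (exS π i) := exRun_const h0 hi h1 h2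
        rw [hK3] at c4 c5
        omega
    · rw [if_neg m1, if_neg m2]; omega

noncomputable def extract (π : PlanePartition) (h0 : π.toFun 0 0 ≠ 0) : PlanePartition where
  toFun := exFun π
  anti_left := exFun_left h0
  anti_right := exFun_right h0
  finite_support := by
    apply π.finite_support.subset
    intro p hp
    simp only [Set.mem_setOf_eq] at hp ⊢
    intro hz
    exact hp (by unfold exFun; omega)

lemma extract_toFun (h0 : π.toFun 0 0 ≠ 0) (i j : ℕ) :
    (extract π h0).toFun i j = π.toFun i j - if exMem π i j then 1 else 0 := rfl

end Mac

namespace Mac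

open Finset

variable {π : PlanePartition}

lemma vol_eq_sum_subset {F : Finset (ℕ × ℕ)} (hF : π.finite_support.toFinset ⊆ F) :
    π.vol = ∑ p ∈ F, π.toFun p.1 p.2 := by
  unfold PlanePartition.vol
  refine Finset.sum_subset hF ?_
  intro x _ hx
  by_contra hc
  exact hx (by simpa [Set.Finite.mem_toFinset] using hc)

lemma tele (g : ℕ → ℕ) : ∀ n, (∀ k, k < n → g k ≤ g (k+1)) →
    g 0 ≤ g n ∧ ∑ k ∈ Finset.range n, (g (k+1) + 1 - g k) = g n + n - g 0 := by
  intro n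
  induction n with
  | zero => intro _; simp
  | succ m ih =>
    intro hmono
    obtain ⟨h1, h2⟩ := ih (fun k hk => hmono k (by omega))
    have h3 := hmono m (by omega)
    rw [Finset.sum_range_succ, h2]
    omega

lemma exMem_bound (h0 : π.toFun 0 0 ≠ 0) {i j : ℕ} (hm : exMem π i j) :
    i ≤ exA π ∧ j ≤ exB π := by
  obtain ⟨hi, h1, h2⟩ := hm
  refine ⟨hi, le_trans h2 ?_⟩
  exact exCol_le_exB h0 _ (by omega)

lemma path_count (h0 : π.toFun 0 0 ≠ 0) :
    ∑ p ∈ Finset.range (exA π + 1) ×ˢ Finset.range (exB π + 1),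
      (if exMem π p.1 p.2 then 1 else 0) = exA π + exB π + 1 := by
  rw [Finset.sum_product]
  have hrow : ∀ i ∈ Finset.range (exA π + 1),
      (∑ j ∈ Finset.range (exB π + 1), if exMem π i j then 1 else 0)
        = exE π i + 1 - exS π i := by
    intro i hi
    rw [Finset.mem_range] at hi
    have hia : i ≤ exA π := by omega
    have hE : exE π i ≤ exB π := exCol_le_exB h0 _ (by omega)
    have hSE : exS π i ≤ exE π i := exS_le_exE h0 hia
    have : ∀ j, exMem π i j ↔ (exS π i ≤ j ∧ j ≤ exE π i) := by
      intro j
      unfold exMem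
      constructor
      · rintro ⟨_, a, b⟩; exact ⟨a, b⟩
      · rintro ⟨a, b⟩; exact ⟨hia, a, b⟩
    simp only [this]
    rw [Finset.sum_boole]
    have hfil : (Finset.range (exB π + 1)).filter (fun j => exS π i ≤ j ∧ j ≤ exE π i)
        = Finset.Icc (exS π i) (exE π i) := by
      ext j
      simp only [Finset.mem_filter, Finset.mem_range, Finset.mem_Icc]
      omega
    rw [hfil]
    simp only [Nat.card_Icc, Nat.cast_id]
  rw [Finset.sum_congr rfl hrow]
  -- now ∑ i in range (a+1), (exE π i + 1 - exS π i) ; substitute exS/exE and reflect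
  have hterm : ∀ i ∈ Finset.range (exA π + 1),
      exE π i + 1 - exS π i = exCol π (exA π - i + 1) + 1 - exCol π (exA π - i) := by
    intro i _; rfl
  rw [Finset.sum_congr rfl hterm]
  have hrefl := Finset.sum_range_reflect
    (fun k => exCol π (k + 1) + 1 - exCol π k) (exA π + 1)
  have hco : ∀ j ∈ Finset.range (exA π + 1),
      exCol π (exA π + 1 - 1 - j + 1) + 1 - exCol π (exA π + 1 - 1 - j)
      = exCol π (exA π - j + 1) + 1 - exCol π (exA π - j) := by
    intro j _
    have : exA π + 1 - 1 - j = exA π - j := by omega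
    rw [this]
  rw [← Finset.sum_congr rfl hco, hrefl]
  obtain ⟨h1, h2⟩ := tele (exCol π) (exA π + 1) (fun k hk => exCol_mono h0 (by omega))
  rw [h2]
  have hc0 : exCol π 0 = 0 := rfl
  have : exCol π (exA π + 1) = exB π := rfl
  omega

lemma vol_extract (h0 : π.toFun 0 0 ≠ 0) :
    π.vol = (extract π h0).vol + (exA π + exB π + 1) := by
  classical
  set box : Finset (ℕ × ℕ) := Finset.range (exA π + 1) ×ˢ Finset.range (exB π + 1) with hbox
  set F : Finset (ℕ × ℕ) := box ∪ π.finite_support.toFinset with hF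
  have hsub : π.finite_support.toFinset ⊆ F := Finset.subset_union_right
  have hsub' : (extract π h0).finite_support.toFinset ⊆ F := by
    intro p hp
    apply hsub
    simp only [Set.Finite.mem_toFinset, Set.mem_setOf_eq] at hp ⊢
    intro hz
    exact hp (by rw [extract_toFun]; omega)
  rw [vol_eq_sum_subset hsub, vol_eq_sum_subset hsub']
  have hpoint : ∀ p ∈ F, π.toFun p.1 p.2
      = (extract π h0).toFun p.1 p.2 + (if exMem π p.1 p.2 then 1 else 0) := by
    intro p _
    rw [extract_toFun]
    by_cases hm : exMem π p.1 p.2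
    · have := exMem_pos h0 hm
      rw [if_pos hm]
      omega
    · rw [if_neg hm]
      omega
  rw [Finset.sum_congr rfl hpoint, Finset.sum_add_distrib]
  congr 1
  have hboxsub : box ⊆ F := Finset.subset_union_left
  rw [← path_count h0]
  symm
  refine Finset.sum_subset hboxsub ?_
  intro p _ hp
  rw [if_neg]
  intro hm
  obtain ⟨hi, hj⟩ := exMem_bound h0 hm
  exact hp (by simp [hbox, Finset.mem_product]; omega)

end Mac

namespace Mac

variable {π : PlanePartition}

/-! ### insertion -/

noncomputable def inCol (π : PlanePartition) (b : ℕ) : ℕ → ℕ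
  | 0 => b
  | k+1 => wStart π.toFun k (inCol π b k)

def inMem (π : PlanePartition) (a b i j : ℕ) : Prop :=
  i ≤ a ∧ inCol π b (i+1) ≤ j ∧ j ≤ inCol π b i

noncomputable instance (π : PlanePartition) (a b i j : ℕ) : Decidable (inMem π a b i j) := by
  unfold inMem; infer_instance

noncomputable def inFun (π : PlanePartition) (a b : ℕ) : ℕ → ℕ → ℕ :=
  fun i j => π.toFun i j + if inMem π a b i j then 1 else 0

lemma inCol_succ (b i : ℕ) : inCol π b (i+1) = wStart π.toFun i (inCol π b i) := rfl

lemma inCol_anti (b i : ℕ) : inCol π b (i+1) ≤ inCol π b i := wStart_le i _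

lemma inCol_le_b (b : ℕ) : ∀ i, inCol π b i ≤ b := by
  intro i
  induction i with
  | zero => exact le_rfl
  | succ n ih => exact le_trans (inCol_anti b n) ih

/-- J1 : the insertion path is constant along each row segment -/
lemma inRun_const (b : ℕ) {i j : ℕ} (h1 : inCol π b (i+1) ≤ j) (h2 : j ≤ inCol π b i) :
    π.toFun i j = π.toFun i (inCol π b i) :=
  wStart_const i _ h1 h2

/-- J3 : strict increase just left of the start of each row segment -/
lemma inRun_strict (b : ℕ) {i : ℕ} (h : 0 < inCol π b (i+1)) :
    π.toFun i (inCol π b i) < π.toFun i (inCol π b (i+1) - 1) :=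
  wStart_strict i _ h

lemma inFun_right (a b i j : ℕ) : inFun π a b i (j+1) ≤ inFun π a b i j := by
  unfold inFun
  have hanti := π.anti_right i j
  by_cases m1 : inMem π a b i j
  · by_cases m2 : inMem π a b i (j+1)
    · rw [if_pos m1, if_pos m2]; omega
    · rw [if_pos m1, if_neg m2]; omega
  · by_cases m2 : inMem π a b i (j+1)
    · rw [if_neg m1, if_pos m2]
      obtain ⟨hi, h1, h2⟩ := m2
      have hj : j + 1 = inCol π b (i+1) := by
        by_contra hc
        have hja : inCol π b (i+1) ≤ j := by omega
        exact m1 ⟨hi, hja, by omega⟩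
      have hpos : 0 < inCol π b (i+1) := by omega
      have hs := inRun_strict b hpos
      have hc1 : π.toFun i (j+1) = π.toFun i (inCol π b i) := inRun_const b h1 h2
      have hj' : inCol π b (i+1) - 1 = j := by omega
      rw [hj'] at hs
      omega
    · rw [if_neg m1, if_neg m2]; omega

lemma inFun_left (a b i j : ℕ) : inFun π a b (i+1) j ≤ inFun π a b i j := by
  unfold inFun
  have hanti := π.anti_left i j
  by_cases m1 : inMem π a b (i+1) j
  · by_cases m2 : inMem π a b i j
    · rw [if_pos m1, if_pos m2]; omega
    · rw [if_pos m1, if_neg m2]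
      obtain ⟨hi1, h1, h2⟩ := m1
      -- j ≤ inCol (i+1) = t_{i+1} = u_i ; (i,j) off means j < inCol b (i+1)
      have hioff : j < inCol π b (i+1) := by
        by_contra hc
        push_neg at hc
        exact m2 ⟨by omega, hc, le_trans h2 (inCol_anti b i)⟩
      have hpos : 0 < inCol π b (i+1) := by omega
      have c1 : π.toFun (i+1) j = π.toFun (i+1) (inCol π b (i+1)) := inRun_const b h1 h2
      have c2 : π.toFun (i+1) (inCol π b (i+1)) ≤ π.toFun i (inCol π b (i+1)) :=
        π.anti_left i _
      have c3 : π.toFun i (inCol π b (i+1)) < π.toFun i (inCol π b (i+1) - 1) := by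
        have := inRun_strict b hpos
        -- this : π.toFun i (inCol π b i) < π.toFun i (inCol π b (i+1) - 1)
        have hup : π.toFun i (inCol π b (i+1)) ≤ π.toFun i (inCol π b i) := by
          have := inRun_const b (le_refl (inCol π b (i+1))) (inCol_anti b i)
          omega
        omega
      have c4 : π.toFun i (inCol π b (i+1) - 1) ≤ π.toFun i j :=
        anti_right' π i (by omega)
      omega
  · by_cases m2 : inMem π a b i j
    · rw [if_neg m1, if_pos m2]; omega
    · rw [if_neg m1, if_neg m2]; omega

noncomputable def insert (π : PlanePartition) (a b : ℕ) : PlanePartition where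
  toFun := inFun π a b
  anti_left := inFun_left a b
  anti_right := inFun_right a b
  finite_support := by
    apply Set.Finite.subset (Set.Finite.union π.finite_support
      (Set.finite_Icc ((0:ℕ),(0:ℕ)) ((a,b))))
    intro p hp
    simp only [Set.mem_setOf_eq, Set.mem_union, Set.mem_Icc] at hp ⊢
    by_cases hm : inMem π a b p.1 p.2
    · right
      obtain ⟨hi, h1, h2⟩ := hm
      have := inCol_le_b (π := π) b p.1
      constructor
      · constructor <;> omega
      · constructor <;> omega
    · left
      intro hz
      exact hp (by unfold inFun; rw [if_neg hm]; omega)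

lemma insert_toFun (a b i j : ℕ) :
    (insert π a b).toFun i j = π.toFun i j + if inMem π a b i j then 1 else 0 := rfl

end Mac

namespace Mac

variable {π : PlanePartition}

lemma L1_cols (h0 : π.toFun 0 0 ≠ 0) :
    ∀ i, i ≤ exA π →
      inCol (extract π h0) (exB π) i = exE π i ∧
      inCol (extract π h0) (exB π) (i+1) = exS π i := by
  have key : ∀ i, i ≤ exA π → inCol (extract π h0) (exB π) i = exE π i →
      wStart (extract π h0).toFun i (exE π i) = exS π i := by
    intro i hia _
    have hSE := exS_le_exE h0 hia
    have hposS := exS_pos h0 hia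
    have memS : exMem π i (exS π i) := ⟨hia, le_rfl, hSE⟩
    have memE : exMem π i (exE π i) := ⟨hia, hSE, le_rfl⟩
    have hvalS : (extract π h0).toFun i (exS π i) = π.toFun i (exS π i) - 1 := by
      rw [extract_toFun, if_pos memS]
    have hvalE : (extract π h0).toFun i (exE π i) = π.toFun i (exS π i) - 1 := by
      rw [extract_toFun, if_pos memE, exRun_const h0 hia hSE le_rfl]
    refine le_antisymm ?_ ?_
    · exact wStart_le_of (π := extract π h0) i _ (by rw [hvalS, hvalE])
    · by_contra hc
      push_neg at hc
      set w := wStart (extract π h0).toFun i (exE π i) with hw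
      have heq : (extract π h0).toFun i w = (extract π h0).toFun i (exE π i) :=
        wStart_eq (π := extract π h0) i _
      have hoff : ¬ exMem π i w := by
        intro hmem
        exact absurd hmem.2.1 (by omega)
      have hvw : (extract π h0).toFun i w = π.toFun i w := by
        rw [extract_toFun, if_neg hoff]
        omega
      have hge : π.toFun i (exS π i) ≤ π.toFun i w := anti_right' π i (by omega)
      rw [hvw, hvalE] at heq
      omega
  intro i
  induction i with
  | zero =>
    intro h0a
    have hbase : inCol (extract π h0) (exB π) 0 = exE π 0 := by
      show exB π = exE π 0
      unfold exB exE
      rw [Nat.sub_zero]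
    refine ⟨hbase, ?_⟩
    rw [inCol_succ, hbase]
    exact key 0 h0a hbase
  | succ n ih =>
    intro hia
    have hn : n ≤ exA π := by omega
    obtain ⟨ih1, ih2⟩ := ih hn
    have hstep : inCol (extract π h0) (exB π) (n+1) = exE π (n+1) := by
      rw [ih2]
      exact exS_eq_exE_succ (by omega)
    refine ⟨hstep, ?_⟩
    rw [inCol_succ, hstep]
    exact key (n+1) hia hstep

lemma insert_extract (h0 : π.toFun 0 0 ≠ 0) :
    insert (extract π h0) (exA π) (exB π) = π := by
  apply PP.ext
  funext i j
  rw [insert_toFun, extract_toFun]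
  by_cases hm : exMem π i j
  · have hin : inMem (extract π h0) (exA π) (exB π) i j := by
      obtain ⟨hia, h1, h2⟩ := hm
      obtain ⟨c1, c2⟩ := L1_cols h0 i hia
      exact ⟨hia, by omega, by omega⟩
    rw [if_pos hm, if_pos hin]
    have := exMem_pos h0 hm
    omega
  · have hin : ¬ inMem (extract π h0) (exA π) (exB π) i j := by
      intro hmem
      obtain ⟨hia, h1, h2⟩ := hmem
      obtain ⟨c1, c2⟩ := L1_cols h0 i hia
      exact hm ⟨hia, by omega, by omega⟩
    rw [if_neg hm, if_neg hin]
    omega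

end Mac

namespace Mac

variable {π : PlanePartition}

lemma extract_insert (π' : PlanePartition) (a b : ℕ)
    (H1 : π'.toFun (a+1) 0 = 0) (H2 : inCol π' b (a+1) = 0) :
    ∃ h0 : (insert π' a b).toFun 0 0 ≠ 0,
      extract (insert π' a b) h0 = π' ∧
      exA (insert π' a b) = a ∧ exB (insert π' a b) = b := by
  set π'' := insert π' a b with hπ''
  have mem_a0 : inMem π' a b a 0 := ⟨le_rfl, by omega, Nat.zero_le _⟩
  have hA0 : π''.toFun a 0 = π'.toFun a 0 + 1 := by
    rw [hπ'', insert_toFun, if_pos mem_a0]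
  have h0 : π''.toFun 0 0 ≠ 0 := by
    have := anti_left' π'' (Nat.zero_le a) 0
    omega
  have hAsucc : π''.toFun (a+1) 0 = 0 := by
    rw [hπ'', insert_toFun, if_neg (by intro hm; exact absurd hm.1 (by omega))]
    omega
  have hexA : exA π'' = a := by
    have hmem : (a+1) ∈ {i | π''.toFun i 0 = 0} := hAsucc
    have hlow : ∀ i, i ≤ a → π''.toFun i 0 ≠ 0 := by
      intro i hi
      have := anti_left' π'' hi 0
      omega
    have h1 : sInf {i | π''.toFun i 0 = 0} = a + 1 := by
      refine le_antisymm (Nat.sInf_le hmem) ?_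
      by_contra hc
      push_neg at hc
      have hmem2 := Nat.sInf_mem (s := {i | π''.toFun i 0 = 0}) ⟨a+1, hmem⟩
      exact hlow _ (by omega) hmem2
    unfold exA
    omega
  have hcols : ∀ k, k ≤ a + 1 → exCol π'' k = inCol π' b (a+1-k) := by
    intro k
    induction k with
    | zero => intro _; rw [Nat.sub_zero, H2]; rfl
    | succ n ih =>
      intro hk
      have hn : n ≤ a := by omega
      have ihn := ih (by omega)
      set i := a - n with hi
      have hrow : a + 1 - n = i + 1 := by omega
      rw [hrow] at ihn
      have hgoalrow : a + 1 - (n+1) = i := by omega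
      rw [hgoalrow]
      show eEnd π''.toFun (exA π'' - n) (exCol π'' n) = inCol π' b i
      rw [hexA, ← hi, ihn]
      -- show eEnd π''.toFun i (inCol π' b (i+1)) = inCol π' b i
      set u := inCol π' b (i+1) with hu
      set t := inCol π' b i with ht
      have hut : u = wStart π'.toFun i t := rfl
      have hut' : u ≤ t := wStart_le i t
      have hia : i ≤ a := by omega
      have memU : inMem π' a b i u := ⟨hia, le_rfl, hut'⟩
      have valU : π''.toFun i u = π'.toFun i t + 1 := by
        rw [hπ'', insert_toFun, if_pos memU, hut]
        rw [wStart_eq (π := π') i t]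
      have memT : t ∈ {j | π''.toFun i (j+1) < π''.toFun i u} := by
        have hofft : ¬ inMem π' a b i (t+1) := by
          intro hm
          exact absurd hm.2.2 (by omega)
        have : π''.toFun i (t+1) = π'.toFun i (t+1) := by
          rw [hπ'', insert_toFun, if_neg hofft]; omega
        have h2 : π'.toFun i (t+1) ≤ π'.toFun i t := π'.anti_right i t
        simp only [Set.mem_setOf_eq, this, valU]
        omega
      refine le_antisymm (Nat.sInf_le memT) ?_
      refine le_csInf ⟨t, memT⟩ ?_
      intro j hj
      simp only [Set.mem_setOf_eq] at hj
      by_contra hc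
      push_neg at hc
      rcases Nat.lt_or_ge (j+1) u with hlt | hge
      · -- j+1 strictly left of u
        have hoff : ¬ inMem π' a b i (j+1) := by
          intro hm
          exact absurd hm.2.1 (by omega)
        have hval : π''.toFun i (j+1) = π'.toFun i (j+1) := by
          rw [hπ'', insert_toFun, if_neg hoff]; omega
        have hpos : 0 < u := by omega
        have hstrict : π'.toFun i t < π'.toFun i (u - 1) := by
          rw [hut] at hpos ⊢
          exact wStart_strict i t hpos
        have hmono : π'.toFun i (u-1) ≤ π'.toFun i (j+1) := anti_right' π' i (by omega)
        rw [hval, valU] at hj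
        omega
      · -- u ≤ j+1 ≤ t : on the path
        have hmem : inMem π' a b i (j+1) := ⟨hia, hge, by omega⟩
        have hval : π''.toFun i (j+1) = π'.toFun i (j+1) + 1 := by
          rw [hπ'', insert_toFun, if_pos hmem]
        have hconst : π'.toFun i (j+1) = π'.toFun i t := inRun_const b hge (by omega)
        rw [hval, hconst, valU] at hj
        omega
  have hexB : exB π'' = b := by
    unfold exB
    rw [hexA, hcols (a+1) le_rfl, Nat.sub_self]
    rfl
  have hmem_iff : ∀ i j, exMem π'' i j ↔ inMem π' a b i j := by
    intro i j
    unfold exMem exS exE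
    rw [hexA]
    constructor
    · rintro ⟨hia, h1, h2⟩
      rw [hcols (a - i) (by omega)] at h1
      rw [hcols (a - i + 1) (by omega)] at h2
      have e1 : a + 1 - (a - i) = i + 1 := by omega
      have e2 : a + 1 - (a - i + 1) = i := by omega
      rw [e1] at h1; rw [e2] at h2
      exact ⟨hia, h1, h2⟩
    · rintro ⟨hia, h1, h2⟩
      rw [hcols (a - i) (by omega), hcols (a - i + 1) (by omega)]
      have e1 : a + 1 - (a - i) = i + 1 := by omega
      have e2 : a + 1 - (a - i + 1) = i := by omega
      rw [e1, e2]
      exact ⟨hia, h1, h2⟩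
  refine ⟨h0, ?_, hexA, hexB⟩
  apply PP.ext
  funext i j
  rw [extract_toFun, hπ'', insert_toFun]
  by_cases hm : inMem π' a b i j
  · rw [if_pos hm, if_pos ((hmem_iff i j).2 hm)]; omega
  · rw [if_neg hm, if_neg (fun hc => hm ((hmem_iff i j).1 hc))]; omega

lemma wStart_eq_zero {i t : ℕ} (h : π.toFun i 0 = π.toFun i t) :
    wStart π.toFun i t = 0 :=
  Nat.le_zero.mp (wStart_le_of i t h)

lemma pre_zero (π' : PlanePartition) (hz : π'.toFun 0 0 = 0) (a b : ℕ) :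
    π'.toFun (a+1) 0 = 0 ∧ inCol π' b (a+1) = 0 := by
  have hall : ∀ i j, π'.toFun i j = 0 := by
    intro i j
    have := le00 π' i j
    omega
  refine ⟨hall _ _, ?_⟩
  have : ∀ m, inCol π' b (m+1) = 0 := by
    intro m
    induction m with
    | zero =>
      rw [inCol_succ]
      exact wStart_eq_zero (by rw [hall, hall])
    | succ n ih =>
      rw [inCol_succ, ih]
      exact wStart_eq_zero rfl
  exact this a

lemma pre_ord (π' : PlanePartition) (h0' : π'.toFun 0 0 ≠ 0) (a b : ℕ)
    (hord : exA π' < a ∨ (exA π' = a ∧ b ≤ exB π')) :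
    π'.toFun (a+1) 0 = 0 ∧ inCol π' b (a+1) = 0 := by
  rcases hord with hlt | ⟨ha, hb⟩
  · refine ⟨exA_zero_row h0' (by omega) 0, ?_⟩
    have hrowa : ∀ j, π'.toFun a j = 0 := fun j => exA_zero_row h0' (by omega) j
    rw [inCol_succ]
    exact wStart_eq_zero (by rw [hrowa, hrowa])
  · subst ha
    constructor
    · exact exA_succ h0'
    · have claim : ∀ i, i ≤ exA π' → inCol π' b i ≤ exE π' i := by
        intro i
        induction i with
        | zero =>
          intro _
          show b ≤ exE π' 0
          unfold exE
          rw [Nat.sub_zero]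
          exact hb
        | succ n ih =>
          intro hia
          have hn : n ≤ exA π' := by omega
          have ihn := ih hn
          rw [inCol_succ]
          rw [← exS_eq_exE_succ (show n < exA π' by omega)]
          rcases Nat.lt_or_ge (inCol π' b n) (exS π' n) with hlt | hge
          · exact le_trans (wStart_le n _) (by omega)
          · have : π'.toFun n (inCol π' b n) = π'.toFun n (exS π' n) :=
              exRun_const h0' hn hge ihn
            exact wStart_le_of n _ (by rw [this, exRun_const h0' hn (le_refl (exS π' n)) (exS_le_exE h0' hn)])
      rw [inCol_succ]
      have hcl := claim (exA π') le_rfl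
      have hS0 : exS π' (exA π') = 0 := exS_bottom
      have hconst : π'.toFun (exA π') (inCol π' b (exA π')) = π'.toFun (exA π') 0 := by
        have := exRun_const h0' (le_refl (exA π')) (by omega) hcl
        rw [hS0] at this
        exact this
      exact wStart_eq_zero hconst.symm

end Mac

namespace Mac

variable {π : PlanePartition}

lemma exA_extract_le (h0 : π.toFun 0 0 ≠ 0) : exA (extract π h0) ≤ exA π := by
  have hz : (extract π h0).toFun (exA π + 1) 0 = 0 := by
    rw [extract_toFun]
    have := exA_succ h0
    omega
  have hmem : (exA π + 1) ∈ {i | (extract π h0).toFun i 0 = 0} := hz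
  have h2 := Nat.sInf_le hmem
  show sInf {i | (extract π h0).toFun i 0 = 0} - 1 ≤ exA π
  omega

lemma hook_mono (h0 : π.toFun 0 0 ≠ 0) (h0' : (extract π h0).toFun 0 0 ≠ 0) :
    exA (extract π h0) < exA π ∨
    (exA (extract π h0) = exA π ∧ exB π ≤ exB (extract π h0)) := by
  set π' := extract π h0 with hπ'
  rcases Nat.lt_or_ge (exA π') (exA π) with hlt | hge
  · exact Or.inl hlt
  have ha : exA π' = exA π := le_antisymm (exA_extract_le h0) hge
  right
  refine ⟨ha, ?_⟩
  have claim : ∀ k, k ≤ exA π + 1 → exCol π k ≤ exCol π' k := by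
    intro k
    induction k with
    | zero => intro _; rfl
    | succ n ih =>
      intro hk
      have hn : n ≤ exA π := by omega
      have ihn := ih (by omega)
      set i := exA π - n with hi
      have hia : i ≤ exA π := by omega
      have hSn : exS π i = exCol π n := by
        unfold exS
        rw [show exA π - i = n by omega]
      have hEn : exE π i = exCol π (n+1) := by
        unfold exE
        rw [show exA π - i + 1 = n + 1 by omega]
      have hp' : π'.toFun i (exCol π' n) ≠ 0 := by
        have := exPos (π := π') h0' n (by omega)
        rw [ha, ← hi] at this
        exact this
      have hL : exCol π (n+1) = eEnd π.toFun i (exCol π n) := by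
        show eEnd π.toFun (exA π - n) (exCol π n) = _
        rw [← hi]
      have hR : exCol π' (n+1) = eEnd π'.toFun i (exCol π' n) := by
        show eEnd π'.toFun (exA π' - n) (exCol π' n) = _
        rw [ha, ← hi]
      rw [hL, hR]
      rcases Nat.lt_or_ge (eEnd π.toFun i (exCol π n)) (exCol π' n) with hlt2 | hge2
      · -- s' is beyond the old segment end
        have := le_eEnd (π := π') i (exCol π' n) hp'
        omega
      · -- s' within [s, e] : π' constant there
        have hmemS' : exMem π i (exCol π' n) := by
          refine ⟨hia, ?_, ?_⟩
          · rw [hSn]; exact ihn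
          · rw [hEn, hL]; exact hge2
        have hmemE : exMem π i (exE π i) := ⟨hia, exS_le_exE h0 hia, le_rfl⟩
        have v1 : π'.toFun i (exCol π' n) = π.toFun i (exS π i) - 1 := by
          rw [hπ', extract_toFun, if_pos hmemS']
          rw [exRun_const h0 hia (by rw [hSn]; exact ihn) (by rw [hEn, hL]; exact hge2)]
        have v2 : π'.toFun i (exE π i) = π.toFun i (exS π i) - 1 := by
          rw [hπ', extract_toFun, if_pos hmemE]
          rw [exRun_const h0 hia (exS_le_exE h0 hia) le_rfl]
        have hcon : π'.toFun i (exE π i) = π'.toFun i (exCol π' n) := by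
          rw [v1, v2]
        have := le_eEnd_of_const (π := π') i (exCol π' n) hp' hcon
        rw [hEn, hL] at this
        exact this
  have hfin := claim (exA π + 1) le_rfl
  unfold exB
  rw [ha]
  exact hfin

end Mac

namespace Mac

variable {π : PlanePartition}

def zeroPP : PlanePartition :=
  ⟨fun _ _ => 0, fun _ _ => le_rfl, fun _ _ => le_rfl, by simp⟩

noncomputable def Φ (π : PlanePartition) : (ℕ × ℕ) →₀ ℕ :=
  if h0 : π.toFun 0 0 = 0 then 0
  else Φ (extract π h0) + Finsupp.single (exA π, exB π) 1
termination_by π.vol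
decreasing_by
  have := vol_extract (π := π) h0
  omega

lemma Φ_zero (h0 : π.toFun 0 0 = 0) : Φ π = 0 := by
  rw [Φ, dif_pos h0]

lemma Φ_pos (h0 : ¬ π.toFun 0 0 = 0) :
    Φ π = Φ (extract π h0) + Finsupp.single (exA π, exB π) 1 := by
  rw [Φ]
  rw [dif_neg h0]

def wt (f : (ℕ × ℕ) →₀ ℕ) : ℕ := f.sum fun p n => (p.1 + p.2 + 1) * n

lemma wt_add (f g : (ℕ × ℕ) →₀ ℕ) : wt (f + g) = wt f + wt g :=
  Finsupp.sum_add_index' (fun a => by simp) (fun a b c => by ring)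

lemma wt_single (p : ℕ × ℕ) : wt (Finsupp.single p 1) = p.1 + p.2 + 1 := by
  unfold wt
  rw [Finsupp.sum_single_index (by simp)]
  ring

lemma vol_zero (h0 : π.toFun 0 0 = 0) : π.vol = 0 := by
  unfold PlanePartition.vol
  refine Finset.sum_eq_zero ?_
  intro p _
  have := le00 π p.1 p.2
  omega

lemma wt_Φ : ∀ n (π : PlanePartition), π.vol = n → wt (Φ π) = π.vol := by
  intro n
  induction n using Nat.strong_induction_on with
  | _ n ih =>
    intro π hv
    by_cases h0 : π.toFun 0 0 = 0
    · rw [Φ_zero h0, vol_zero h0]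
      simp [wt]
    · rw [Φ_pos h0, wt_add, wt_single]
      have hvol := vol_extract (π := π) h0
      have hlt : (extract π h0).vol < n := by omega
      have := ih _ hlt (extract π h0) rfl
      simp only at this ⊢
      omega

lemma Φ_apply_hook (h0 : ¬ π.toFun 0 0 = 0) : Φ π (exA π, exB π) ≠ 0 := by
  rw [Φ_pos h0]
  rw [Finsupp.add_apply, Finsupp.single_eq_same]
  omega

/-- every hook in the image is `⊑` the first hook -/
lemma Φ_supp_ord : ∀ n (π : PlanePartition), π.vol = n → ¬ π.toFun 0 0 = 0 →
    ∀ p ∈ (Φ π).support, p.1 < exA π ∨ (p.1 = exA π ∧ exB π ≤ p.2) := by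
  intro n
  induction n using Nat.strong_induction_on with
  | _ n ih =>
    intro π hv h0 p hp
    rw [Φ_pos h0] at hp
    have := Finsupp.support_add hp
    rw [Finset.mem_union] at this
    rcases this with h1 | h2
    · -- p in support of Φ (extract π h0)
      by_cases hz : (extract π h0).toFun 0 0 = 0
      · rw [Φ_zero hz] at h1
        simp at h1
      · have hvol := vol_extract (π := π) h0
        have ihp := ih _ (by omega) (extract π h0) rfl hz p h1
        have hmono := hook_mono h0 hz
        rcases ihp with ha | ⟨ha, hb⟩ <;> rcases hmono with hc | ⟨hc, hd⟩
        · left; omega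
        · left; omega
        · left; omega
        · right; omega
    · have := Finsupp.support_single_subset h2
      rw [Finset.mem_singleton] at this
      subst this
      right
      exact ⟨rfl, le_rfl⟩

lemma Φ_inj : ∀ n (π₁ π₂ : PlanePartition), π₁.vol = n → Φ π₁ = Φ π₂ → π₁ = π₂ := by
  intro n
  induction n using Nat.strong_induction_on with
  | _ n ih =>
    intro π₁ π₂ hv hEq
    by_cases h1 : π₁.toFun 0 0 = 0
    · have hΦ2 : Φ π₂ = 0 := by rw [← hEq, Φ_zero h1]
      by_cases h2 : π₂.toFun 0 0 = 0
      · apply PP.ext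
        funext i j
        have a1 := le00 π₁ i j
        have a2 := le00 π₂ i j
        omega
      · exact absurd (by rw [hΦ2]; rfl) (Φ_apply_hook h2)
    · have h2 : ¬ π₂.toFun 0 0 = 0 := by
        intro h2
        have hΦ1 : Φ π₁ = 0 := by rw [hEq, Φ_zero h2]
        exact (Φ_apply_hook h1) (by rw [hΦ1]; rfl)
      have m1 : (exA π₁, exB π₁) ∈ (Φ π₁).support :=
        Finsupp.mem_support_iff.2 (Φ_apply_hook h1)
      have m2 : (exA π₂, exB π₂) ∈ (Φ π₁).support := by
        rw [hEq]
        exact Finsupp.mem_support_iff.2 (Φ_apply_hook h2)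
      have o1 := Φ_supp_ord _ π₁ rfl h1 _ m2
      have o2 := Φ_supp_ord _ π₂ rfl h2 _ (hEq ▸ m1)
      simp only at o1 o2
      have hA : exA π₁ = exA π₂ := by omega
      have hB : exB π₁ = exB π₂ := by omega
      have hEq' : Φ (extract π₁ h1) = Φ (extract π₂ h2) := by
        have e1 := Φ_pos h1
        have e2 := Φ_pos h2
        rw [e1, e2, hA, hB] at hEq
        exact add_right_cancel hEq
      have hvol := vol_extract (π := π₁) h1
      have hres := ih _ (by omega) (extract π₁ h1) (extract π₂ h2) rfl hEq'
      have r1 := insert_extract h1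
      have r2 := insert_extract h2
      rw [← r1, ← r2, hres, hA, hB]

lemma exists_max (f : (ℕ × ℕ) →₀ ℕ) (hf : f ≠ 0) :
    ∃ h ∈ f.support, ∀ p ∈ f.support, p.1 < h.1 ∨ (p.1 = h.1 ∧ h.2 ≤ p.2) := by
  have hne : f.support.Nonempty := Finsupp.support_nonempty_iff.2 hf
  have hne1 : (f.support.image Prod.fst).Nonempty := hne.image _
  set A := (f.support.image Prod.fst).max' hne1 with hA
  have hAmem : A ∈ f.support.image Prod.fst := Finset.max'_mem _ _
  obtain ⟨q, hq, hqA⟩ := Finset.mem_image.1 hAmem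
  have hne2 : ((f.support.filter (fun p => p.1 = A)).image Prod.snd).Nonempty :=
    ⟨q.2, Finset.mem_image_of_mem _ (Finset.mem_filter.2 ⟨hq, hqA⟩)⟩
  set B := ((f.support.filter (fun p => p.1 = A)).image Prod.snd).min' hne2 with hB
  have hBmem : B ∈ (f.support.filter (fun p => p.1 = A)).image Prod.snd :=
    Finset.min'_mem _ _
  obtain ⟨r, hr, hrB⟩ := Finset.mem_image.1 hBmem
  rw [Finset.mem_filter] at hr
  refine ⟨(A, B), ?_, ?_⟩
  · have : r = (A, B) := Prod.ext hr.2 hrB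
    rw [← this]
    exact hr.1
  · intro p hp
    have hle : p.1 ≤ A := Finset.le_max' _ _ (Finset.mem_image_of_mem _ hp)
    rcases Nat.lt_or_ge p.1 A with hlt | hge
    · exact Or.inl hlt
    · have hpA : p.1 = A := by omega
      right
      refine ⟨hpA, ?_⟩
      exact Finset.min'_le _ _ (Finset.mem_image_of_mem _ (Finset.mem_filter.2 ⟨hp, hpA⟩))

lemma Φ_surj : ∀ n (f : (ℕ × ℕ) →₀ ℕ), wt f = n → ∃ π, Φ π = f := by
  intro n
  induction n using Nat.strong_induction_on with
  | _ n ih =>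
    intro f hwt
    by_cases hf : f = 0
    · exact ⟨zeroPP, by rw [Φ_zero rfl, hf]⟩
    · obtain ⟨h, hmem, hmax⟩ := exists_max f hf
      set f' := f - Finsupp.single h 1 with hf'
      have hfh : f h ≠ 0 := Finsupp.mem_support_iff.1 hmem
      have hsplit : f = f' + Finsupp.single h 1 := by
        ext p
        rw [Finsupp.add_apply, hf', Finsupp.tsub_apply]
        by_cases hp : p = h
        · subst hp
          rw [Finsupp.single_eq_same]
          omega
        · rw [Finsupp.single_eq_of_ne' (fun hc => hp hc.symm)]
          omega
      have hsupp' : f'.support ⊆ f.support := by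
        intro p hp
        rw [Finsupp.mem_support_iff] at hp ⊢
        rw [hf', Finsupp.tsub_apply] at hp
        omega
      have hwt' : wt f' < n := by
        have := wt_add f' (Finsupp.single h 1)
        rw [← hsplit, wt_single] at this
        omega
      obtain ⟨π', hπ'⟩ := ih _ hwt' f' rfl
      have hpre : π'.toFun (h.1+1) 0 = 0 ∧ inCol π' h.2 (h.1+1) = 0 := by
        by_cases hz : π'.toFun 0 0 = 0
        · exact pre_zero π' hz h.1 h.2
        · apply pre_ord π' hz h.1 h.2
          have hmem' : (exA π', exB π') ∈ f'.support := by
            rw [← hπ']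
            exact Finsupp.mem_support_iff.2 (Φ_apply_hook hz)
          have := hmax _ (hsupp' hmem')
          simpa using this
      obtain ⟨h0'', hext, hA, hB⟩ := extract_insert π' h.1 h.2 hpre.1 hpre.2
      refine ⟨insert π' h.1 h.2, ?_⟩
      rw [Φ_pos h0'', hext, hπ', hA, hB, ← hsplit]

lemma Φ_bij : Function.Bijective Φ :=
  ⟨fun a b h => Φ_inj a.vol a b rfl h, fun f => Φ_surj (wt f) f rfl⟩

end Mac

namespace Mac

open Finset

section Analysis

variable {q : ℝ}

/-- weight of one cell -/
noncomputable def gg (q : ℝ) (p : ℕ × ℕ) : ℝ := q ^ (p.1 + p.2 + 1)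

lemma gg_nonneg (hq0 : 0 < q) (p : ℕ × ℕ) : 0 ≤ gg q p := by
  unfold gg; positivity

lemma gg_le_q (hq0 : 0 < q) (hq1 : q < 1) (p : ℕ × ℕ) : gg q p ≤ q := by
  have := pow_le_pow_of_le_one hq0.le hq1.le (show 1 ≤ p.1 + p.2 + 1 by omega)
  simpa [gg] using this

lemma gg_lt_one (hq0 : 0 < q) (hq1 : q < 1) (p : ℕ × ℕ) : gg q p < 1 :=
  lt_of_le_of_lt (gg_le_q hq0 hq1 p) hq1

lemma summable_gg (hq0 : 0 < q) (hq1 : q < 1) : Summable (gg q) := by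
  have h1 : Summable (fun m : ℕ => ‖q ^ m‖) := by
    simpa [Real.norm_eq_abs, abs_of_nonneg (pow_nonneg hq0.le _)] using
      summable_geometric_of_lt_one hq0.le hq1
  have h2 : Summable (fun z : ℕ × ℕ => q ^ z.1 * q ^ z.2) :=
    summable_mul_of_summable_norm h1 h1
  have h3 := h2.mul_left q
  apply h3.congr
  intro z
  unfold gg
  ring

def finSuccArrowEquiv (n : ℕ) : (Fin (n+1) → ℕ) ≃ ℕ × (Fin n → ℕ) where
  toFun f := (f 0, fun i => f i.succ)
  invFun p := Fin.cons p.1 p.2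
  left_inv f := by
    funext i
    refine Fin.cases ?_ (fun j => ?_) i <;> simp
  right_inv p := by
    ext <;> simp

lemma lemA : ∀ (n : ℕ) (x : Fin n → ℝ), (∀ i, 0 ≤ x i) → (∀ i, x i < 1) →
    Summable (fun f : Fin n → ℕ => ∏ i, x i ^ f i) ∧
    ∑' f : Fin n → ℕ, ∏ i, x i ^ f i = ∏ i, (1 - x i)⁻¹ := by
  intro n
  induction n with
  | zero =>
    intro x _ _
    constructor
    · exact Summable.of_finite
    · rw [tsum_eq_single (default : Fin 0 → ℕ) (fun b hb => absurd (Subsingleton.elim b _) hb)]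
      simp
  | succ n ih =>
    intro x hx0 hx1
    set xs : Fin n → ℝ := fun i => x i.succ with hxs
    obtain ⟨ihS, ihT⟩ := ih xs (fun i => hx0 _) (fun i => hx1 _)
    have hgeo : Summable (fun m : ℕ => x 0 ^ m) :=
      summable_geometric_of_lt_one (hx0 0) (hx1 0)
    have hgeoN : Summable (fun m : ℕ => ‖x 0 ^ m‖) := by
      simpa [Real.norm_eq_abs, abs_of_nonneg (pow_nonneg (hx0 0) _)] using hgeo
    have hprodnonneg : ∀ f : Fin n → ℕ, 0 ≤ ∏ i, xs i ^ f i := by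
      intro f
      exact Finset.prod_nonneg fun i _ => pow_nonneg (hx0 _) _
    have ihSN : Summable (fun f : Fin n → ℕ => ‖∏ i, xs i ^ f i‖) := by
      apply ihS.congr
      intro f
      rw [Real.norm_eq_abs, abs_of_nonneg (hprodnonneg f)]
    have hsum2 : Summable (fun z : ℕ × (Fin n → ℕ) => x 0 ^ z.1 * ∏ i, xs i ^ z.2 i) :=
      summable_mul_of_summable_norm (f := fun m : ℕ => x 0 ^ m)
        (g := fun f : Fin n → ℕ => ∏ i, xs i ^ f i) hgeoN ihSN
    have htsum2 := tsum_mul_tsum_of_summable_norm (f := fun m : ℕ => x 0 ^ m)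
        (g := fun f : Fin n → ℕ => ∏ i, xs i ^ f i) hgeoN ihSN
    set E := finSuccArrowEquiv n with hE
    have hcomp : ∀ f : Fin (n+1) → ℕ,
        (∏ i, x i ^ f i) = x 0 ^ (E f).1 * ∏ i, xs i ^ (E f).2 i := by
      intro f
      rw [Fin.prod_univ_succ]
      rfl
    constructor
    · apply (E.summable_iff).2 hsum2 |>.congr
      intro f
      exact (hcomp f).symm
    · have h1 : ∑' f : Fin (n+1) → ℕ, ∏ i, x i ^ f i
          = ∑' z : ℕ × (Fin n → ℕ), x 0 ^ z.1 * ∏ i, xs i ^ z.2 i := by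
        rw [← E.tsum_eq (fun z : ℕ × (Fin n → ℕ) => x 0 ^ z.1 * ∏ i, xs i ^ z.2 i)]
        exact tsum_congr hcomp
      rw [h1, ← htsum2, ihT, tsum_geometric_of_lt_one (hx0 0) (hx1 0), Fin.prod_univ_succ]

lemma lemA' (s : Finset (ℕ × ℕ)) (hq0 : 0 < q) (hq1 : q < 1) :
    Summable (fun f : (↥s → ℕ) => ∏ p : ↥s, gg q ↑p ^ f p) ∧
    ∑' f : ↥s → ℕ, ∏ p : ↥s, gg q ↑p ^ f p = ∏ p ∈ s, (1 - gg q p)⁻¹ := by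
  classical
  set e : ↥s ≃ Fin (Fintype.card ↥s) := Fintype.equivFin ↥s with he
  set y : Fin (Fintype.card ↥s) → ℝ := fun j => gg q ↑(e.symm j) with hy
  obtain ⟨hS, hT⟩ := lemA (Fintype.card ↥s) y
    (fun j => gg_nonneg hq0 _) (fun j => gg_lt_one hq0 hq1 _)
  set E : (↥s → ℕ) ≃ (Fin (Fintype.card ↥s) → ℕ) :=
    Equiv.arrowCongr e (Equiv.refl ℕ) with hEdef
  have hcomp : ∀ f : ↥s → ℕ, (∏ p : ↥s, gg q ↑p ^ f p) = ∏ j, y j ^ (E f) j := by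
    intro f
    rw [← Equiv.prod_comp e.symm (fun p : ↥s => gg q ↑p ^ f p)]
    apply Finset.prod_congr rfl
    intro j _
    congr 1
  have hsum : Summable (fun f : (↥s → ℕ) => ∏ p : ↥s, gg q ↑p ^ f p) := by
    have := (E.summable_iff (f := fun g : Fin (Fintype.card ↥s) → ℕ => ∏ j, y j ^ g j)).2 hS
    apply this.congr
    intro f
    exact (hcomp f).symm
  refine ⟨hsum, ?_⟩
  have h1 : ∑' f : ↥s → ℕ, ∏ p : ↥s, gg q ↑p ^ f p
      = ∑' g : Fin (Fintype.card ↥s) → ℕ, ∏ j, y j ^ g j := by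
    rw [← E.tsum_eq (fun g : Fin (Fintype.card ↥s) → ℕ => ∏ j, y j ^ g j)]
    exact tsum_congr hcomp
  rw [h1, hT]
  rw [← Finset.prod_coe_sort s (fun p => (1 - gg q p)⁻¹)]
  rw [← Equiv.prod_comp e.symm (fun p : ↥s => (1 - gg q ↑p)⁻¹)]

end Analysis

end Mac

namespace Mac

open Finset

section Analysis2

variable {q : ℝ}

noncomputable def PPP (q : ℝ) (s : Finset (ℕ × ℕ)) : ℝ := ∏ p ∈ s, (1 - gg q p)⁻¹

lemma one_le_prodR {ι : Type*} {f : ι → ℝ} {u : Finset ι} (h : ∀ i ∈ u, 1 ≤ f i) :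
    1 ≤ ∏ i ∈ u, f i := by
  classical
  induction u using Finset.induction_on with
  | empty => simp
  | @insert a u ha ih =>
    rw [Finset.prod_insert ha]
    have h1 := h a (Finset.mem_insert_self a u)
    have h2 := ih (fun i hi => h i (Finset.mem_insert_of_mem hi))
    nlinarith

lemma prod_mono_one_le {ι : Type*} [DecidableEq ι] {f : ι → ℝ} {s t : Finset ι} (h : s ⊆ t)
    (h1 : ∀ i ∈ t, 1 ≤ f i) : ∏ i ∈ s, f i ≤ ∏ i ∈ t, f i := by
  rw [← Finset.prod_sdiff h]
  have hs1 : 1 ≤ ∏ i ∈ t \ s, f i :=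
    one_le_prodR (fun i hi => h1 i (Finset.mem_sdiff.1 hi).1)
  have hs0 : 0 ≤ ∏ i ∈ s, f i :=
    Finset.prod_nonneg fun i hi => le_trans zero_le_one (h1 i (h hi))
  nlinarith

lemma one_le_inv_gg (hq0 : 0 < q) (hq1 : q < 1) (p : ℕ × ℕ) : 1 ≤ (1 - gg q p)⁻¹ := by
  have h1 : 0 < 1 - gg q p := by linarith [gg_lt_one hq0 hq1 p]
  have h2 : 1 - gg q p ≤ 1 := by linarith [gg_nonneg hq0 p]
  exact (one_le_inv₀ h1).2 h2

lemma PPP_mono (hq0 : 0 < q) (hq1 : q < 1) {s s' : Finset (ℕ × ℕ)} (h : s ⊆ s') :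
    PPP q s ≤ PPP q s' := by
  unfold PPP
  exact prod_mono_one_le h (fun p _ => one_le_inv_gg hq0 hq1 p)

lemma W_eq_prod (s : Finset (ℕ × ℕ)) (f : (ℕ × ℕ) →₀ ℕ) (hs : f.support ⊆ s) :
    q ^ wt f = ∏ p ∈ s, gg q p ^ f p := by
  have hwt : wt f = ∑ p ∈ s, (p.1 + p.2 + 1) * f p :=
    Finsupp.sum_of_support_subset f hs _ (fun i _ => by simp)
  rw [hwt, ← Finset.prod_pow_eq_pow_sum]
  apply Finset.prod_congr rfl
  intro p _
  rw [gg, pow_mul]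

lemma W_eq_prod' (s : Finset (ℕ × ℕ)) (f : (ℕ × ℕ) →₀ ℕ) (hs : f.support ⊆ s) :
    q ^ wt f = ∏ p : ↥s, gg q ↑p ^ f ↑p := by
  rw [W_eq_prod s f hs, ← Finset.prod_coe_sort s (fun p => gg q p ^ f p)]

noncomputable def extS (s : Finset (ℕ × ℕ)) (f : ↥s → ℕ) : (ℕ × ℕ) →₀ ℕ :=
  Finsupp.onFinset s (fun p => if hp : p ∈ s then f ⟨p, hp⟩ else 0)
    (fun p hp => by by_contra hc; exact hp (by simp [hc]))

lemma extS_support (s : Finset (ℕ × ℕ)) (f : ↥s → ℕ) : (extS s f).support ⊆ s :=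
  Finsupp.support_onFinset_subset

lemma extS_apply (s : Finset (ℕ × ℕ)) (f : ↥s → ℕ) (p : ↥s) : extS s f ↑p = f p := by
  unfold extS
  rw [Finsupp.onFinset_apply, dif_pos p.2]

lemma ext_res (s : Finset (ℕ × ℕ)) (f : (ℕ × ℕ) →₀ ℕ) (hs : f.support ⊆ s) :
    extS s (fun p => f ↑p) = f := by
  ext p
  unfold extS
  rw [Finsupp.onFinset_apply]
  by_cases hp : p ∈ s
  · rw [dif_pos hp]
  · rw [dif_neg hp]
    symm
    by_contra hc
    exact hp (hs (Finsupp.mem_support_iff.2 hc))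

lemma W_via_ext (s : Finset (ℕ × ℕ)) (f : ↥s → ℕ) :
    q ^ wt (extS s f) = ∏ p : ↥s, gg q ↑p ^ f p := by
  rw [W_eq_prod' s _ (extS_support s f)]
  exact Finset.prod_congr rfl (fun p _ => by rw [extS_apply])

lemma sum_le_PPP (hq0 : 0 < q) (hq1 : q < 1) (t : Finset ((ℕ × ℕ) →₀ ℕ))
    (s : Finset (ℕ × ℕ)) (hts : ∀ f ∈ t, f.support ⊆ s) :
    ∑ f ∈ t, q ^ wt f ≤ PPP q s := by
  obtain ⟨hS, hT⟩ := lemA' s hq0 hq1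
  have hinj : ∀ f₁ ∈ t, ∀ f₂ ∈ t, (fun p : ↥s => f₁ ↑p) = (fun p : ↥s => f₂ ↑p) → f₁ = f₂ := by
    intro f₁ h₁ f₂ h₂ heq
    have := congrArg (extS s) heq
    rwa [ext_res s f₁ (hts f₁ h₁), ext_res s f₂ (hts f₂ h₂)] at this
  have h1 : ∑ f ∈ t, q ^ wt f
      = ∑ h ∈ t.image (fun f => (fun p : ↥s => f ↑p)), ∏ p : ↥s, gg q ↑p ^ h p := by
    rw [Finset.sum_image hinj]
    exact Finset.sum_congr rfl (fun f hf => W_eq_prod' s f (hts f hf))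
  rw [h1]
  unfold PPP
  rw [← hT]
  exact Summable.sum_le_tsum _ (fun f _ => Finset.prod_nonneg fun p _ =>
    pow_nonneg (gg_nonneg hq0 _) _) hS

lemma PPP_le_B (hq0 : 0 < q) (hq1 : q < 1) (s : Finset (ℕ × ℕ)) :
    PPP q s ≤ Real.exp ((1 - q)⁻¹ * ∑' p, gg q p) := by
  set C := (1 - q)⁻¹ with hC
  have hq1' : (0:ℝ) < 1 - q := by linarith
  have hC0 : 0 ≤ C := le_of_lt (inv_pos.2 hq1')
  have hfac : ∀ p ∈ s, (1 - gg q p)⁻¹ ≤ Real.exp (C * gg q p) := by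
    intro p _
    set x := gg q p with hx
    have hx0 : 0 ≤ x := gg_nonneg hq0 p
    have hxq : x ≤ q := gg_le_q hq0 hq1 p
    have h1 : 0 < 1 - x := by linarith
    have hcancel : (1 - q) * C = 1 := mul_inv_cancel₀ (by linarith)
    have hkey : 1 ≤ (1 + C * x) * (1 - x) := by
      nlinarith [mul_nonneg (mul_nonneg hC0 hx0) (sub_nonneg.2 hxq)]
    have step1 : (1 - x)⁻¹ ≤ 1 + C * x := by
      rw [inv_eq_one_div, div_le_iff₀ h1]
      linarith
    have step2 : 1 + C * x ≤ Real.exp (C * x) := by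
      have := Real.add_one_le_exp (C * x)
      linarith
    linarith
  calc PPP q s ≤ ∏ p ∈ s, Real.exp (C * gg q p) :=
        Finset.prod_le_prod (fun p _ => le_of_lt (inv_pos.2 (by
          linarith [gg_lt_one hq0 hq1 p]))) hfac
    _ = Real.exp (∑ p ∈ s, C * gg q p) := (Real.exp_sum s _).symm
    _ ≤ Real.exp (C * ∑' p, gg q p) := by
        apply Real.exp_le_exp.2
        rw [← Finset.mul_sum]
        apply mul_le_mul_of_nonneg_left _ hC0
        exact Summable.sum_le_tsum s (fun p _ => gg_nonneg hq0 p) (summable_gg hq0 hq1)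

lemma summable_W (hq0 : 0 < q) (hq1 : q < 1) :
    Summable (fun f : (ℕ × ℕ) →₀ ℕ => q ^ wt f) := by
  apply summable_of_sum_le (c := Real.exp ((1 - q)⁻¹ * ∑' p, gg q p))
  · intro f
    positivity
  · intro t
    refine le_trans (sum_le_PPP hq0 hq1 t (t.sup Finsupp.support)
      (fun f hf => Finset.le_sup hf)) ?_
    exact PPP_le_B hq0 hq1 _

lemma PPP_le_T (hq0 : 0 < q) (hq1 : q < 1) (s : Finset (ℕ × ℕ)) :
    PPP q s ≤ ∑' f : (ℕ × ℕ) →₀ ℕ, q ^ wt f := by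
  obtain ⟨hS, hT⟩ := lemA' s hq0 hq1
  unfold PPP
  rw [← hT]
  apply Summable.tsum_le_of_sum_le hS
  intro u
  have hinj : ∀ f₁ ∈ u, ∀ f₂ ∈ u, extS s f₁ = extS s f₂ → f₁ = f₂ := by
    intro f₁ _ f₂ _ heq
    funext p
    have := congrArg (fun h : (ℕ × ℕ) →₀ ℕ => h ↑p) heq
    simpa [extS_apply] using this
  have h1 : ∑ f ∈ u, ∏ p : ↥s, gg q ↑p ^ f p = ∑ h ∈ u.image (extS s), q ^ wt h := by
    rw [Finset.sum_image hinj]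
    exact Finset.sum_congr rfl (fun f _ => (W_via_ext s f).symm)
  rw [h1]
  exact Summable.sum_le_tsum _ (fun f _ => by positivity) (summable_W hq0 hq1)

/-! ### the triangle and the product -/

noncomputable def Tri (N : ℕ) : Finset (ℕ × ℕ) :=
  (Finset.range N ×ˢ Finset.range N).filter (fun p => p.1 + p.2 < N)

lemma mem_Tri {N : ℕ} {p : ℕ × ℕ} : p ∈ Tri N ↔ p.1 + p.2 < N := by
  unfold Tri
  simp only [Finset.mem_filter, Finset.mem_product, Finset.mem_range]
  omega

lemma PPP_Tri (hq0 : 0 < q) (N : ℕ) :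
    PPP q (Tri N) = ∏ n ∈ Finset.range N, ((1 - q ^ (n + 1))⁻¹) ^ (n + 1) := by
  classical
  have hTri : Tri N = (Finset.range N).biUnion (fun n => Finset.HasAntidiagonal.antidiagonal n) := by
    ext p
    simp only [mem_Tri, Finset.mem_biUnion, Finset.mem_range, Finset.HasAntidiagonal.mem_antidiagonal]
    constructor
    · intro h; exact ⟨p.1 + p.2, h, rfl⟩
    · rintro ⟨n, hn, hmem⟩
      omega
  have hdisj : (↑(Finset.range N) : Set ℕ).PairwiseDisjoint
      (fun n => Finset.HasAntidiagonal.antidiagonal n) := by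
    intro x _ y _ hxy
    simp only [Function.onFun]
    rw [Finset.disjoint_left]
    intro p hpx hpy
    rw [Finset.HasAntidiagonal.mem_antidiagonal] at hpx hpy
    exact hxy (by omega)
  unfold PPP
  rw [hTri, Finset.prod_biUnion hdisj]
  apply Finset.prod_congr rfl
  intro n _
  have hconst : ∀ p ∈ Finset.HasAntidiagonal.antidiagonal n, (1 - gg q p)⁻¹ = (1 - q ^ (n + 1))⁻¹ := by
    intro p hp
    rw [Finset.HasAntidiagonal.mem_antidiagonal] at hp
    rw [gg, hp]
  rw [Finset.prod_congr rfl hconst, Finset.prod_const, Finset.Nat.card_antidiagonal]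

lemma one_le_F (hq0 : 0 < q) (hq1 : q < 1) (n : ℕ) :
    1 ≤ ((1 - q ^ (n + 1))⁻¹) ^ (n + 1) := by
  have h2 : q ^ (n+1) ≤ q := by
    have := pow_le_pow_of_le_one hq0.le hq1.le (show 1 ≤ n + 1 by omega)
    simpa using this
  have h3 : 0 ≤ q ^ (n+1) := pow_nonneg hq0.le _
  have h4 : (1:ℝ) ≤ (1 - q ^ (n + 1))⁻¹ := (one_le_inv₀ (by linarith)).2 (by linarith)
  exact one_le_pow₀ h4

lemma hasProd_F (hq0 : 0 < q) (hq1 : q < 1) :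
    HasProd (fun n : ℕ => ((1 - q ^ (n + 1))⁻¹) ^ (n + 1))
      (∑' f : (ℕ × ℕ) →₀ ℕ, q ^ wt f) := by
  classical
  set F : ℕ → ℝ := fun n => ((1 - q ^ (n + 1))⁻¹) ^ (n + 1) with hF
  set T : ℝ := ∑' f : (ℕ × ℕ) →₀ ℕ, q ^ wt f with hT
  set M : Finset ℕ → ℝ := fun u => ∏ n ∈ u, F n with hM
  have hM_mono : Monotone M := by
    intro u v huv
    exact prod_mono_one_le huv (fun n _ => one_le_F hq0 hq1 n)
  have hMT : ∀ u : Finset ℕ, M u ≤ T := by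
    intro u
    obtain ⟨N, hN⟩ := u.exists_nat_subset_range
    refine le_trans (hM_mono hN) ?_
    have h2 : M (Finset.range N) = PPP q (Tri N) := (PPP_Tri hq0 N).symm
    rw [h2]
    exact PPP_le_T hq0 hq1 (Tri N)
  have hBdd : BddAbove (Set.range M) := by
    refine ⟨T, ?_⟩
    rintro x ⟨u, rfl⟩
    exact hMT u
  have htend : Filter.Tendsto M Filter.atTop (nhds (⨆ u, M u)) :=
    tendsto_atTop_ciSup hM_mono hBdd
  have hLle : (⨆ u, M u) ≤ T := ciSup_le hMT
  have hTle : T ≤ ⨆ u, M u := by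
    apply Summable.tsum_le_of_sum_le (summable_W hq0 hq1)
    intro t
    set s := t.sup Finsupp.support with hs
    set N := (s.sup (fun p => p.1 + p.2)) + 1 with hN
    have hsTri : s ⊆ Tri N := by
      intro p hp
      rw [mem_Tri]
      have h := Finset.le_sup (f := fun p : ℕ × ℕ => p.1 + p.2) hp
      have h2 : p.1 + p.2 ≤ s.sup (fun p => p.1 + p.2) := h
      omega
    calc ∑ f ∈ t, q ^ wt f
        ≤ PPP q s := sum_le_PPP hq0 hq1 t s (fun f hf => Finset.le_sup hf)
      _ ≤ PPP q (Tri N) := PPP_mono hq0 hq1 hsTri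
      _ = M (Finset.range N) := PPP_Tri hq0 N
      _ ≤ ⨆ u, M u := le_ciSup hBdd (Finset.range N)
  have hLT : (⨆ u, M u) = T := le_antisymm hLle hTle
  rw [← hLT]
  exact htend

end Analysis2

end Mac

/-- MacMahon's generating function: for every `0 < q < 1` the sum of `q^|π|` over all
plane partitions converges and equals `∏_{n ≥ 1} (1 - qⁿ)^{-n}`. -/
theorem macmahon_product (q : ℝ) (hq0 : 0 < q) (hq1 : q < 1) :
    Summable (fun π : PlanePartition => q ^ π.vol) ∧
    Multipliable (fun n : ℕ => ((1 - q ^ (n + 1))⁻¹) ^ (n + 1)) ∧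
    ∑' π : PlanePartition, q ^ π.vol = ∏' n : ℕ, ((1 - q ^ (n + 1))⁻¹) ^ (n + 1) := by
  have bij := Mac.Φ_bij
  set W : ((ℕ × ℕ) →₀ ℕ) → ℝ := fun f => q ^ Mac.wt f with hW
  set e : PlanePartition ≃ ((ℕ × ℕ) →₀ ℕ) := Equiv.ofBijective _ bij with he
  have hfun : (fun π : PlanePartition => q ^ π.vol) = W ∘ e := by
    funext π
    show q ^ π.vol = q ^ Mac.wt (Mac.Φ π)
    rw [Mac.wt_Φ π.vol π rfl]
  have hSW : Summable W := Mac.summable_W hq0 hq1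
  have hSum : Summable (fun π : PlanePartition => q ^ π.vol) := by
    rw [hfun]
    exact (e.summable_iff).2 hSW
  have hProd := Mac.hasProd_F hq0 hq1 (q := q)
  refine ⟨hSum, hProd.multipliable, ?_⟩
  have h1 : ∑' π : PlanePartition, q ^ π.vol = ∑' f, W f := by
    rw [hfun]
    exact e.tsum_eq W
  rw [h1, hProd.tprod_eq]
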